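/- arXiv:1709.00683 — 5 statements merged into one kernel-verified Lean document; each statement's English description precedes it below -/
import Mathlib

section
/- Continuous right inverse from an interior condition: Let X be a normed linear space, C ⊆ X a convex set containing 0, and Λ : X → ℝ^m a continuous linear map such that 0 ∈ int Λ(C). Then there exist ρ > 0, γ > 0 and a continuous mapping R : U_{ℝ^m}(0,ρ) → C such that Λ(R(z)) = z and ‖R(z)‖_X ≤ γ|z| for all z with |z| < ρ. -/
open Set Topology Metric

lemma aux_sum_mem_convex {X : Type*} [AddCommGroup X] [Module ℝ X] {C : Set X}
    (hC : Convex ℝ C) (h0 : (0 : X) ∈ C) {ι : Type*} [Fintype ι]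
    (t : ι → ℝ) (x : ι → X) (ht : ∀ i, 0 ≤ t i) (hsum : ∑ i, t i ≤ 1)
    (hx : ∀ i, x i ∈ C) : (∑ i, t i • x i) ∈ C := by
  classical
  have key := hC.sum_mem (t := (Finset.univ : Finset (Option ι)))
    (w := fun o : Option ι => o.elim (1 - ∑ i, t i) t)
    (z := fun o : Option ι => o.elim 0 x)
    (by
      intro o _
      cases o with
      | none => simpa using hsum
      | some i => exact ht i)
    (by simp [Fintype.sum_option])
    (by
      intro o _
      cases o with
      | none => exact h0
      | some i => exact hx i)
  simpa [Fintype.sum_option] using key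

/-- **Continuous right inverse from an interior condition.**
Let `X` be a normed linear space, `C ⊆ X` a convex set containing `0`, and
`Λ : X → ℝ^m` a continuous linear map such that `0 ∈ int Λ(C)`.  Then there exist
`ρ > 0`, `γ > 0` and a continuous mapping `R : U_{ℝ^m}(0,ρ) → C` such that
`Λ (R z) = z` and `‖R z‖ ≤ γ |z|` for all `z` with `|z| < ρ`. -/
theorem continuous_right_inverse_of_mem_interior_image
    {X : Type*} [NormedAddCommGroup X] [NormedSpace ℝ X] {m : ℕ}
    (C : Set X) (hCconv : Convex ℝ C) (h0C : (0 : X) ∈ C)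
    (Λ : X →L[ℝ] (Fin m → ℝ))
    (hint : (0 : Fin m → ℝ) ∈ interior (Λ '' C)) :
    ∃ ρ > (0:ℝ), ∃ γ > (0:ℝ), ∃ R : (Fin m → ℝ) → X,
      ContinuousOn R (ball (0 : Fin m → ℝ) ρ) ∧
      ∀ z ∈ ball (0 : Fin m → ℝ) ρ,
        R z ∈ C ∧ Λ (R z) = z ∧ ‖R z‖ ≤ γ * ‖z‖ := by
  classical
  rw [mem_interior_iff_mem_nhds, Metric.mem_nhds_iff] at hint
  obtain ⟨ε, hε, hball⟩ := hint
  set δ : ℝ := ε / 2 with hδdef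
  have hδ : 0 < δ := by positivity
  -- the target points
  set v : Fin m × Bool → (Fin m → ℝ) :=
    fun p => (if p.2 then δ else -δ) • (Pi.single p.1 (1 : ℝ) : Fin m → ℝ) with hv
  have hvmem : ∀ p, v p ∈ Λ '' C := by
    intro p
    apply hball
    have : ‖v p‖ = δ := by
      rw [hv]
      simp only [norm_smul, Pi.norm_single, norm_one, mul_one]
      cases hb : p.2 <;> simp [hb, abs_of_pos hδ, abs_of_neg (neg_neg_of_pos hδ), hδ.le]
    simp only [mem_ball, dist_zero_right, this]
    rw [hδdef]; linarith
  have hv' : ∀ p, ∃ x, x ∈ C ∧ Λ x = v p := fun p => (Set.mem_image _ _ _).mp (hvmem p)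
  choose pt hptC hptΛ using hv'
  -- the coefficients
  set cf : (Fin m → ℝ) → Fin m × Bool → ℝ :=
    fun z p => max ((if p.2 then 1 else -1) * z p.1) 0 / δ with hcf
  have hcf_nonneg : ∀ z p, 0 ≤ cf z p := by
    intro z p; exact div_nonneg (le_max_right _ _) hδ.le
  have hcf_le : ∀ z p, cf z p ≤ ‖z‖ / δ := by
    intro z p
    have h1 := abs_le.mp (show |z p.1| ≤ ‖z‖ by simpa using norm_le_pi_norm z p.1)
    rw [hcf]
    apply (div_le_div_iff_of_pos_right hδ).mpr
    rcases Bool.dichotomy p.2 with hb | hb <;> rw [hb] <;>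
      simp only [Bool.false_eq_true, if_false, if_true, one_mul, neg_one_mul] <;>
      exact max_le (by linarith [h1.1, h1.2]) (norm_nonneg z)
  set R : (Fin m → ℝ) → X := fun z => ∑ p, cf z p • pt p with hR
  set ρ : ℝ := δ / (2 * m + 1) with hρ
  have hρpos : 0 < ρ := by positivity
  set γ : ℝ := (∑ p, ‖pt p‖) / δ + 1 with hγ
  have hγpos : 0 < γ := by
    have h : 0 ≤ (∑ p, ‖pt p‖) / δ :=
      div_nonneg (Finset.sum_nonneg fun p _ => norm_nonneg _) hδ.le
    rw [hγ]; linarith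
  refine ⟨ρ, hρpos, γ, hγpos, R, ?_, ?_⟩
  · -- continuity
    apply Continuous.continuousOn
    apply continuous_finset_sum
    intro p _
    have : Continuous fun z : Fin m → ℝ => cf z p := by
      rw [hcf]
      fun_prop
    exact this.smul continuous_const
  · intro z hz
    rw [mem_ball, dist_zero_right] at hz
    refine ⟨?_, ?_, ?_⟩
    · -- membership in C
      apply aux_sum_mem_convex hCconv h0C _ _ (hcf_nonneg z) _ hptC
      have hcard : ∑ _p : Fin m × Bool, (‖z‖ / δ) = (2 * (m:ℝ) * ‖z‖) / δ := by
        simp only [Finset.sum_const, Finset.card_univ, Fintype.card_prod,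
          Fintype.card_fin, Fintype.card_bool, nsmul_eq_mul, Nat.cast_mul,
          Nat.cast_ofNat]
        ring
      have h2 : ‖z‖ * (2 * m + 1) < δ := by
        rw [hρ, lt_div_iff₀ (by positivity)] at hz
        exact hz
      calc ∑ p, cf z p ≤ ∑ _p : Fin m × Bool, ‖z‖ / δ :=
            Finset.sum_le_sum fun p _ => hcf_le z p
        _ = (2 * (m:ℝ) * ‖z‖) / δ := hcard
        _ ≤ 1 := by
            rw [div_le_one hδ]
            nlinarith [norm_nonneg z]
    · -- right inverse
      rw [hR]
      rw [map_sum]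
      simp only [map_smul, hptΛ]
      have hδ' : δ ≠ 0 := hδ.ne'
      have key : ∀ p : Fin m × Bool, cf z p • v p
          = (if p.2 then max (z p.1) 0 else -(max (-(z p.1)) 0)) •
            (Pi.single p.1 (1:ℝ) : Fin m → ℝ) := by
        rintro ⟨i, b⟩
        rw [hcf, hv, smul_smul]
        cases b <;>
          simp only [Bool.false_eq_true, if_true, if_false, one_mul, neg_one_mul] <;>
          congr 1 <;> field_simp
      simp only [key]
      rw [Fintype.sum_prod_type]
      have hrow : ∀ i : Fin m,
          (∑ b : Bool, (if b then max (z i) 0 else -(max (-(z i)) 0)) •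
            (Pi.single i (1:ℝ) : Fin m → ℝ)) = z i • (Pi.single i (1:ℝ) : Fin m → ℝ) := by
        intro i
        rw [Fintype.sum_bool]
        simp only [if_true, Bool.false_eq_true, if_false]
        rw [← add_smul]
        congr 1
        rcases le_total (z i) 0 with h | h
        · rw [max_eq_right h, max_eq_left (by linarith)]; ring
        · rw [max_eq_left h, max_eq_right (by linarith)]; ring
      simp only [hrow]
      ext j
      simp [Pi.single_apply, Finset.sum_ite_eq, mul_comm]
    · -- norm bound
      calc ‖R z‖ ≤ ∑ p, ‖cf z p • pt p‖ := norm_sum_le _ _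
        _ ≤ ∑ p, (‖z‖ / δ) * ‖pt p‖ := by
            apply Finset.sum_le_sum
            intro p _
            rw [norm_smul, Real.norm_eq_abs, abs_of_nonneg (hcf_nonneg z p)]
            exact mul_le_mul_of_nonneg_right (hcf_le z p) (norm_nonneg _)
        _ = ((∑ p, ‖pt p‖) / δ) * ‖z‖ := by rw [← Finset.mul_sum]; ring
        _ ≤ γ * ‖z‖ := by
            apply mul_le_mul_of_nonneg_right _ (norm_nonneg z)
            rw [hγ]; linarith
end

section
/- Example 1: Let T > π. The control dynamical system ẋ₁(t) = u(t), ẋ₂(t) = u(t)² − x₁(t)², u(t) ∈ ℝ for a.e. t ∈ [0,T], with boundary conditions x₁(0) = x₂(0) = x₁(T) = x₂(T) = 0, is locally controllable with respect to the admissible process (x̂,û) = (0,0). -/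
set_option maxHeartbeats 1000000

open MeasureTheory Set intervalIntegral Real


lemma trig_cos_sq (T : ℝ) (hT : 0 < T) (k : ℕ) (hk : 0 < k) :
    (∫ t in (0:ℝ)..T, Real.cos ((k*π/T) * t)^2) = T/2 := by
  have hμ : (k*π/T) ≠ 0 := by
    have := Real.pi_pos
    positivity
  have h := intervalIntegral.integral_comp_mul_left (a := (0:ℝ)) (b := T)
      (f := fun x => Real.cos x ^ 2) hμ
  rw [h]
  have h2 : (k*π/T) * T = k * π := by field_simp
  rw [mul_zero, h2, integral_cos_sq, Real.sin_nat_mul_pi]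
  have : (k:ℝ) * π ≠ 0 := by have := Real.pi_pos; positivity
  field_simp
  simp only [smul_eq_mul, Real.sin_zero, mul_zero, zero_mul, sub_zero, zero_add]
  field_simp

lemma trig_sin_sq (T : ℝ) (hT : 0 < T) (k : ℕ) (hk : 0 < k) :
    (∫ t in (0:ℝ)..T, Real.sin ((k*π/T) * t)^2) = T/2 := by
  have hμ : (k*π/T) ≠ 0 := by
    have := Real.pi_pos
    positivity
  have h := intervalIntegral.integral_comp_mul_left (a := (0:ℝ)) (b := T)
      (f := fun x => Real.sin x ^ 2) hμ
  rw [h]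
  have h2 : (k*π/T) * T = k * π := by field_simp
  rw [mul_zero, h2, integral_sin_sq, Real.sin_nat_mul_pi]
  have : (k:ℝ) * π ≠ 0 := by have := Real.pi_pos; positivity
  field_simp
  simp only [smul_eq_mul, Real.sin_zero, mul_zero, zero_mul, sub_zero, zero_add]
  field_simp

lemma integral_quad (T s : ℝ) (f g h : ℝ → ℝ) (hf : Continuous f) (hg : Continuous g)
    (hh : Continuous h) :
    ∫ t in (0:ℝ)..T, (f t + s * g t + s^2 * h t) =
      (∫ t in (0:ℝ)..T, f t) + s * (∫ t in (0:ℝ)..T, g t)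
        + s^2 * (∫ t in (0:ℝ)..T, h t) := by
  rw [intervalIntegral.integral_add (f := fun t => f t + s * g t) (g := fun t => s^2 * h t) (((hf.add ((continuous_const.mul hg)))).intervalIntegrable 0 T)
      ((continuous_const.mul hh).intervalIntegrable 0 T),
    intervalIntegral.integral_add (f := f) (g := fun t => s * g t) (hf.intervalIntegrable 0 T)
      ((continuous_const.mul hg).intervalIntegrable 0 T),
    intervalIntegral.integral_const_mul, intervalIntegral.integral_const_mul]

lemma exists_param (T : ℝ) (hT : π < T) (a b c d ε ρ : ℝ) (hε : 0 < ε) (hε1 : ε ≤ 1)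
    (hρ0 : 0 < ρ) (hρ1 : ρ ≤ 1)
    (hρ : ρ * ((4/T + 9*T) + (4*((⌈T⌉₊:ℝ)*π/T) + 6*T) + 2)
        ≤ ε^2 * min (4*T) (T/2*(1 - (π/T)^2)))
    (ha : |a| ≤ ρ) (hb : |b| ≤ ρ) (hc : |c| ≤ ρ) (hd : |d| ≤ ρ) :
    ∃ μ s₀ : ℝ, 0 < μ ∧ μ ≤ (⌈T⌉₊:ℝ)*π/T ∧ Real.sin (μ*T) = 0 ∧ s₀ ∈ Icc (0:ℝ) 1 ∧
      (∫ t in (0:ℝ)..T, (((c-a)/T + s₀*(ε*μ*Real.cos (μ*t)))^2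
          - ((a + (c-a)/T*t) + s₀*(ε*Real.sin (μ*t)))^2)) = d - b := by
  have hπ := Real.pi_pos
  have hπ3 := Real.pi_gt_three
  have hT0 : (0:ℝ) < T := lt_trans hπ hT
  set m : ℝ := (c-a)/T with hm
  set N : ℕ := ⌈T⌉₊ with hN
  have hNT : T ≤ (N:ℝ) := Nat.le_ceil T
  have hN0 : 0 < N := by
    have : (0:ℝ) < (N:ℝ) := lt_of_lt_of_le hT0 hNT
    exact_mod_cast this
  set μP : ℝ := (N:ℝ)*π/T with hμP
  have hμP0 : 0 < μP := by positivity
  -- bound on m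
  have hmb : |m| ≤ 2*ρ/T := by
    rw [hm, abs_div, abs_of_pos hT0]
    have h1 : |c - a| ≤ 2*ρ := (abs_sub _ _).trans (by linarith)
    gcongr
  -- bound on ℓ
  have hlb : ∀ t ∈ Set.uIoc (0:ℝ) T, |a + m*t| ≤ 3*ρ := by
    intro t ht
    rw [uIoc_of_le (le_of_lt hT0)] at ht
    have h0 : |a + m*t| ≤ |a| + |m| * |t| := (abs_add_le _ _).trans (by rw [abs_mul])
    have h1 : |t| ≤ T := by rw [abs_of_pos ht.1]; exact ht.2
    have h2 : |m| * |t| ≤ (2*ρ/T)*T :=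
      mul_le_mul hmb h1 (abs_nonneg _) (by positivity)
    have h3 : (2*ρ/T)*T = 2*ρ := by field_simp
    linarith
  -- the three coefficient integrals, for μ = k π / T
  set A : ℝ := ∫ t in (0:ℝ)..T, (m^2 - (a + m*t)^2) with hA
  have hAb : |A| ≤ ρ * (4/T + 9*T) := by
    have key : |A| ≤ (ρ^2*(4/T^2 + 9)) * |T - 0| := by
      rw [hA]
      have key := intervalIntegral.norm_integral_le_of_norm_le_const (a := (0:ℝ)) (b := T)
        (C := ρ^2*(4/T^2 + 9)) (f := fun t => m^2 - (a+m*t)^2) ?_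
      · simpa using key
      intro t ht
      simp only [Real.norm_eq_abs]
      have h1 := hlb t ht
      have h2 : m^2 ≤ (2*ρ/T)^2 := by
        rw [← sq_abs]; exact pow_le_pow_left₀ (abs_nonneg _) hmb 2
      have h3 : (a+m*t)^2 ≤ (3*ρ)^2 := by
        rw [← sq_abs]; exact pow_le_pow_left₀ (abs_nonneg _) h1 2
      have habs := abs_sub (m^2) ((a+m*t)^2)
      rw [abs_of_nonneg (sq_nonneg m), abs_of_nonneg (sq_nonneg (a+m*t))] at habs
      have he : (2*ρ/T)^2 + (3*ρ)^2 = ρ^2*(4/T^2 + 9) := by field_simp; ring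
      linarith
    rw [abs_of_pos (by linarith : (0:ℝ) < T - 0)] at key
    have hrr : ρ^2 ≤ ρ := by nlinarith
    calc |A| ≤ ρ^2*(4/T^2+9)*(T-0) := key
      _ = ρ^2 * (4/T + 9*T) := by field_simp; ring
      _ ≤ ρ * (4/T+9*T) := by
          have hge : (0:ℝ) ≤ 4/T + 9*T := by positivity
          exact mul_le_mul_of_nonneg_right hrr hge
  -- bound on the cross term B, for any 0 < μ ≤ μP
  have hBb : ∀ μ : ℝ, 0 < μ → μ ≤ μP →
      |∫ t in (0:ℝ)..T, (2*(m*(ε*μ*Real.cos (μ*t)) - (a+m*t)*(ε*Real.sin (μ*t))))|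
        ≤ ρ * (4*μP + 6*T) := by
    intro μ hμ0 hμle
    have key : |∫ t in (0:ℝ)..T, (2*(m*(ε*μ*Real.cos (μ*t)) - (a+m*t)*(ε*Real.sin (μ*t))))|
        ≤ (ρ*(4*μP/T + 6)) * |T - 0| := by
      have key := intervalIntegral.norm_integral_le_of_norm_le_const (a := (0:ℝ)) (b := T)
        (C := ρ*(4*μP/T + 6))
        (f := fun t => 2*(m*(ε*μ*Real.cos (μ*t)) - (a+m*t)*(ε*Real.sin (μ*t)))) ?_
      · rw [← Real.norm_eq_abs]; exact key
      intro t ht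
      simp only [Real.norm_eq_abs]
      have h1 := hlb t ht
      have e1 : |m * (ε*μ*Real.cos (μ*t))| ≤ (2*ρ/T)*(ε*(μP*1)) := by
        rw [abs_mul, abs_mul, abs_mul, abs_of_pos hε, abs_of_pos hμ0, mul_assoc]
        gcongr
        exact Real.abs_cos_le_one _
      have e2 : |(a+m*t) * (ε*Real.sin (μ*t))| ≤ (3*ρ)*(ε*1) := by
        rw [abs_mul, abs_mul, abs_of_pos hε]
        gcongr
        exact Real.abs_sin_le_one _

      have e3 : |2*(m*(ε*μ*Real.cos (μ*t)) - (a+m*t)*(ε*Real.sin (μ*t)))|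
          ≤ 2*(|m * (ε*μ*Real.cos (μ*t))| + |(a+m*t) * (ε*Real.sin (μ*t))|) := by
        rw [abs_mul, abs_of_pos (by norm_num : (0:ℝ) < 2)]
        have := abs_sub (m*(ε*μ*Real.cos (μ*t))) ((a+m*t)*(ε*Real.sin (μ*t)))
        linarith
      have e4 : 2*((2*ρ/T)*(ε*(μP*1)) + (3*ρ)*(ε*1)) = ε*(ρ*(4*μP/T + 6)) := by ring
      have e5 : ε*(ρ*(4*μP/T + 6)) ≤ ρ*(4*μP/T + 6) := by
        have hX : (0:ℝ) ≤ ρ*(4*μP/T + 6) := by positivity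
        nlinarith
      linarith
    rw [abs_of_pos (by linarith : (0:ℝ) < T - 0)] at key
    refine key.trans (le_of_eq ?_)
    field_simp; ring
  -- exact value of the quadratic coefficient C
  have hCval : ∀ k : ℕ, 0 < k →
      (∫ t in (0:ℝ)..T, ((ε*((k:ℝ)*π/T)*Real.cos (((k:ℝ)*π/T)*t))^2
          - (ε*Real.sin (((k:ℝ)*π/T)*t))^2))
        = ε^2*(T/2)*(((k:ℝ)*π/T)^2 - 1) := by
    intro k hk
    set μ : ℝ := (k:ℝ)*π/T with hμ
    have hcont1 : Continuous fun t : ℝ => (ε^2*μ^2) * (Real.cos (μ*t))^2 := by fun_prop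
    have hcont2 : Continuous fun t : ℝ => (-(ε^2)) * (Real.sin (μ*t))^2 := by fun_prop
    calc ∫ t in (0:ℝ)..T, ((ε*μ*Real.cos (μ*t))^2 - (ε*Real.sin (μ*t))^2)
        = ∫ t in (0:ℝ)..T, ((ε^2*μ^2) * (Real.cos (μ*t))^2 + (-(ε^2)) * (Real.sin (μ*t))^2) :=
          intervalIntegral.integral_congr (fun t _ => by ring)
      _ = (ε^2*μ^2) * (∫ t in (0:ℝ)..T, (Real.cos (μ*t))^2)
          + (-(ε^2)) * (∫ t in (0:ℝ)..T, (Real.sin (μ*t))^2) := by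
          rw [intervalIntegral.integral_add (hcont1.intervalIntegrable 0 T)
            (hcont2.intervalIntegrable 0 T), intervalIntegral.integral_const_mul,
            intervalIntegral.integral_const_mul]
      _ = (ε^2*μ^2) * (T/2) + (-(ε^2)) * (T/2) := by
          rw [trig_cos_sq T hT0 k hk, trig_sin_sq T hT0 k hk]
      _ = ε^2*(T/2)*(μ^2 - 1) := by ring
  -- decomposition of the full integral as a quadratic polynomial in s
  have hGeq : ∀ μ s : ℝ,
      (∫ t in (0:ℝ)..T, ((m + s*(ε*μ*Real.cos (μ*t)))^2
          - ((a + m*t) + s*(ε*Real.sin (μ*t)))^2))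
        = A + s * (∫ t in (0:ℝ)..T, (2*(m*(ε*μ*Real.cos (μ*t)) - (a+m*t)*(ε*Real.sin (μ*t)))))
          + s^2 * (∫ t in (0:ℝ)..T, ((ε*μ*Real.cos (μ*t))^2 - (ε*Real.sin (μ*t))^2)) := by
    intro μ s
    have hf : Continuous fun t : ℝ => m^2 - (a + m*t)^2 := by fun_prop
    have hg : Continuous fun t : ℝ =>
        2*(m*(ε*μ*Real.cos (μ*t)) - (a+m*t)*(ε*Real.sin (μ*t))) := by fun_prop
    have hh : Continuous fun t : ℝ =>
        (ε*μ*Real.cos (μ*t))^2 - (ε*Real.sin (μ*t))^2 := by fun_prop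
    calc (∫ t in (0:ℝ)..T, ((m + s*(ε*μ*Real.cos (μ*t)))^2
          - ((a + m*t) + s*(ε*Real.sin (μ*t)))^2))
        = ∫ t in (0:ℝ)..T, ((m^2 - (a + m*t)^2)
            + s * (2*(m*(ε*μ*Real.cos (μ*t)) - (a+m*t)*(ε*Real.sin (μ*t))))
            + s^2 * ((ε*μ*Real.cos (μ*t))^2 - (ε*Real.sin (μ*t))^2)) :=
          intervalIntegral.integral_congr (fun t _ => by ring)
      _ = _ := by rw [integral_quad T s _ _ _ hf hg hh, hA]
  -- target
  have hτ : |d - b| ≤ 2*ρ := (abs_sub _ _).trans (by linarith)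
  have hτ1 : d - b ≤ 2*ρ := (le_abs_self _).trans hτ
  have hτ2 : -(2*ρ) ≤ d - b := neg_le_of_abs_le hτ
  have hmin1 : ρ * ((4/T + 9*T) + (4*μP + 6*T) + 2) ≤ ε^2 * (4*T) :=
    hρ.trans (mul_le_mul_of_nonneg_left (min_le_left _ _) (by positivity))
  have hmin2 : ρ * ((4/T + 9*T) + (4*μP + 6*T) + 2) ≤ ε^2 * (T/2*(1 - (π/T)^2)) :=
    hρ.trans (mul_le_mul_of_nonneg_left (min_le_right _ _) (by positivity))
  by_cases hcase : A ≤ d - b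
  · -- use the high-frequency perturbation μP
    set μ : ℝ := μP with hμdef
    have hμeq : μ = (N:ℝ)*π/T := rfl
    have hπμ : π ≤ μ := by
      rw [hμeq, le_div_iff₀ hT0]
      nlinarith
    set B : ℝ := ∫ t in (0:ℝ)..T, (2*(m*(ε*μ*Real.cos (μ*t)) - (a+m*t)*(ε*Real.sin (μ*t)))) with hB
    set C : ℝ := ∫ t in (0:ℝ)..T, ((ε*μ*Real.cos (μ*t))^2 - (ε*Real.sin (μ*t))^2) with hC
    have hCeq : C = ε^2*(T/2)*(μ^2 - 1) := hCval N hN0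
    have hBabs : |B| ≤ ρ * (4*μP + 6*T) := hBb μ hμP0 le_rfl
    have hCge : 4*ε^2*T ≤ C := by
      rw [hCeq]
      have h9 : (0:ℝ) ≤ μ^2 - 9 := by nlinarith
      have hkey : (0:ℝ) ≤ ε^2 * T * (μ^2 - 9) :=
        mul_nonneg (mul_nonneg (sq_nonneg ε) hT0.le) h9
      nlinarith
    set G : ℝ → ℝ := fun s => A + s * B + s^2 * C with hG
    have hGc : ContinuousOn G (Icc 0 1) := (by fun_prop : Continuous G).continuousOn
    have hG1 : d - b ≤ G 1 := by
      have h1 : -(ρ * (4/T + 9*T)) ≤ A := neg_le_of_abs_le hAb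
      have h2 : -(ρ * (4*μP + 6*T)) ≤ B := neg_le_of_abs_le hBabs
      simp only [hG, one_pow, one_mul]
      linarith
    have hG0 : G 0 = A := by simp [hG]
    have := intermediate_value_Icc (zero_le_one) hGc
    have hmem : d - b ∈ Icc (G 0) (G 1) := by
      rw [hG0]; exact ⟨hcase, hG1⟩
    obtain ⟨s₀, hs₀, hGs₀⟩ := this hmem
    refine ⟨μ, s₀, by positivity, le_rfl, ?_, hs₀, ?_⟩
    · rw [hμeq, div_mul_cancel₀ _ (ne_of_gt hT0)]
      exact Real.sin_nat_mul_pi N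
    · rw [hGeq μ s₀, ← hB, ← hC]
      exact hGs₀
  · -- use the slow perturbation π/T
    push_neg at hcase
    set μ : ℝ := ((1:ℕ):ℝ)*π/T with hμdef
    have hμ0 : 0 < μ := by rw [hμdef]; positivity
    have hμle : μ ≤ μP := by
      rw [hμdef, hμP]
      gcongr
      have h1 : (1:ℕ) ≤ N := hN0
      exact_mod_cast h1
    set B : ℝ := ∫ t in (0:ℝ)..T, (2*(m*(ε*μ*Real.cos (μ*t)) - (a+m*t)*(ε*Real.sin (μ*t)))) with hB
    set C : ℝ := ∫ t in (0:ℝ)..T, ((ε*μ*Real.cos (μ*t))^2 - (ε*Real.sin (μ*t))^2) with hC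
    have hCeq : C = ε^2*(T/2)*(μ^2 - 1) := hCval 1 one_pos
    have hBabs : |B| ≤ ρ * (4*μP + 6*T) := hBb μ hμ0 hμle
    have hCle : C ≤ -(ε^2 * (T/2*(1 - (π/T)^2))) := by
      rw [hCeq, hμdef]
      push_cast
      ring_nf
      nlinarith [sq_nonneg ε]
    set G : ℝ → ℝ := fun s => A + s * B + s^2 * C with hG
    have hGc : ContinuousOn G (Icc 0 1) := (by fun_prop : Continuous G).continuousOn
    have hG1 : G 1 ≤ d - b := by
      have h1 : A ≤ ρ * (4/T + 9*T) := le_of_abs_le hAb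
      have h2 : B ≤ ρ * (4*μP + 6*T) := le_of_abs_le hBabs
      simp only [hG, one_pow, one_mul]
      linarith
    have hG0 : G 0 = A := by simp [hG]
    have := intermediate_value_Icc' (zero_le_one) hGc
    have hmem : d - b ∈ Icc (G 1) (G 0) := by
      rw [hG0]; exact ⟨hG1, le_of_lt hcase⟩
    obtain ⟨s₀, hs₀, hGs₀⟩ := this hmem
    refine ⟨μ, s₀, hμ0, hμle, ?_, hs₀, ?_⟩
    · rw [hμdef, div_mul_cancel₀ _ (ne_of_gt hT0)]
      exact Real.sin_nat_mul_pi 1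
    · rw [hGeq μ s₀, ← hB, ← hC]
      exact hGs₀

/-- **Example 1.**  For `T > π` the system `ẋ₁ = u`, `ẋ₂ = u² − x₁²`, `u(t) ∈ ℝ` a.e.
on `[0,T]`, with boundary conditions `x₁(0)=x₂(0)=x₁(T)=x₂(T)=0`, is locally controllable
with respect to the admissible process `(x̂,û) = (0,0)` : for every neighbourhood of `x̂ = 0`
in `C([0,T],ℝ²)` (a sup-ball of radius `δ`) there is a neighbourhood of the origin of `ℝ⁴`
(a ball of radius `ρ`) such that every boundary value `y = (y', y'')` in it is realized by
a trajectory staying in the given neighbourhood. -/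
theorem example1_locally_controllable (T : ℝ) (hT : Real.pi < T) :
    ∀ δ > (0:ℝ), ∃ ρ > (0:ℝ),
      ∀ y : (ℝ × ℝ) × (ℝ × ℝ), ‖y‖ < ρ →
        ∃ x₁ x₂ u : ℝ → ℝ,
          ContinuousOn x₁ (Icc (0:ℝ) T) ∧ ContinuousOn x₂ (Icc (0:ℝ) T) ∧
          Measurable u ∧
          (∃ C : ℝ, ∀ᵐ t ∂(volume.restrict (Icc (0:ℝ) T)), |u t| ≤ C) ∧
          IntervalIntegrable u volume 0 T ∧
          IntervalIntegrable (fun s => (u s) ^ 2 - (x₁ s) ^ 2) volume 0 T ∧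
          (∀ t ∈ Icc (0:ℝ) T, x₁ t = x₁ 0 + ∫ s in (0:ℝ)..t, u s) ∧
          (∀ t ∈ Icc (0:ℝ) T, x₂ t = x₂ 0 + ∫ s in (0:ℝ)..t, ((u s) ^ 2 - (x₁ s) ^ 2)) ∧
          ((x₁ 0, x₂ 0), (x₁ T, x₂ T)) = y ∧
          (∀ t ∈ Icc (0:ℝ) T, |x₁ t| < δ ∧ |x₂ t| < δ) := by
  intro δ hδ
  have hπ := Real.pi_pos
  have hπ3 := Real.pi_gt_three
  have hT0 : (0:ℝ) < T := hπ.trans hT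
  set N : ℕ := ⌈T⌉₊ with hN
  have hNT : T ≤ (N:ℝ) := Nat.le_ceil T
  set μP : ℝ := (N:ℝ)*π/T with hμPdef
  have hμP0 : 0 < μP := by
    have : (0:ℝ) < (N:ℝ) := lt_of_lt_of_le hT0 hNT
    positivity
  set K : ℝ := (2/T + μP)^2 + 16 with hK
  have hK0 : 0 < K := by positivity
  set ε : ℝ := min (δ/5) (min 1 (δ/(2*(1+T*K)))) with hεdef
  have hε0 : 0 < ε := by
    apply lt_min (by positivity)
    apply lt_min one_pos (by positivity)
  have hε1 : ε ≤ 1 := (min_le_right _ _).trans (min_le_left _ _)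
  have hεδ5 : ε ≤ δ/5 := min_le_left _ _
  have hεK : ε ≤ δ/(2*(1+T*K)) := (min_le_right _ _).trans (min_le_right _ _)
  set D : ℝ := (4/T + 9*T) + (4*μP + 6*T) + 2 with hD
  have hD0 : 0 < D := by positivity
  set M : ℝ := min (4*T) (T/2*(1 - (π/T)^2)) with hM
  have hM0 : 0 < M := by
    apply lt_min (by positivity)
    have h1 : π/T < 1 := (div_lt_one hT0).mpr hT
    have h2 : 0 < π/T := div_pos hπ hT0
    have h3 : 0 < 1 - (π/T)^2 := by nlinarith
    nlinarith [mul_pos hT0 h3]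
  set ρ : ℝ := min ε (min 1 (ε^2*M/D)) with hρdef
  have hρ0 : 0 < ρ := by
    apply lt_min hε0
    apply lt_min one_pos (by positivity)
  have hρε : ρ ≤ ε := min_le_left _ _
  have hρ1 : ρ ≤ 1 := (min_le_right _ _).trans (min_le_left _ _)
  have hρD : ρ * D ≤ ε^2 * M := by
    have h1 : ρ ≤ ε^2*M/D := (min_le_right _ _).trans (min_le_right _ _)
    calc ρ * D ≤ (ε^2*M/D)*D := mul_le_mul_of_nonneg_right h1 hD0.le
      _ = ε^2*M := by field_simp
  refine ⟨ρ, hρ0, ?_⟩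
  rintro ⟨⟨a, b⟩, c, d⟩ hy
  -- component bounds
  have hnorm : ∀ z : ℝ, (|z| = ‖z‖) := fun z => (Real.norm_eq_abs z).symm
  have ha : |a| ≤ ρ := by
    rw [hnorm]
    exact le_of_lt (lt_of_le_of_lt ((norm_fst_le (a,b)).trans (norm_fst_le ((a,b),(c,d)))) hy)
  have hb : |b| ≤ ρ := by
    rw [hnorm]
    exact le_of_lt (lt_of_le_of_lt ((norm_snd_le (a,b)).trans (norm_fst_le ((a,b),(c,d)))) hy)
  have hc : |c| ≤ ρ := by
    rw [hnorm]
    exact le_of_lt (lt_of_le_of_lt ((norm_fst_le (c,d)).trans (norm_snd_le ((a,b),(c,d)))) hy)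
  have hd : |d| ≤ ρ := by
    rw [hnorm]
    exact le_of_lt (lt_of_le_of_lt ((norm_snd_le (c,d)).trans (norm_snd_le ((a,b),(c,d)))) hy)
  obtain ⟨μ, s₀, hμ0, hμle, hμT, hs₀, hint⟩ :=
    exists_param T hT a b c d ε ρ hε0 hε1 hρ0 hρ1 hρD ha hb hc hd
  set m : ℝ := (c-a)/T with hm
  set x₁ : ℝ → ℝ := fun t => a + m*t + s₀*(ε*Real.sin (μ*t)) with hx₁
  set u : ℝ → ℝ := fun t => m + s₀*(ε*μ*Real.cos (μ*t)) with hu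
  set x₂ : ℝ → ℝ := fun t => b + ∫ s in (0:ℝ)..t, ((u s)^2 - (x₁ s)^2) with hx₂
  have hucont : Continuous u := by rw [hu]; fun_prop
  have hx₁cont : Continuous x₁ := by rw [hx₁]; fun_prop
  have hfcont : Continuous (fun s => (u s)^2 - (x₁ s)^2) := by fun_prop
  have hx₂cont : Continuous x₂ := by
    rw [hx₂]
    exact continuous_const.add
      (intervalIntegral.continuous_primitive (fun a b => hfcont.intervalIntegrable a b) 0)
  have hs₀1 : |s₀| ≤ 1 := abs_le.mpr ⟨by linarith [hs₀.1], hs₀.2⟩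
  have hmb : |m| ≤ 2*ρ/T := by
    rw [hm, abs_div, abs_of_pos hT0]
    have h1 : |c - a| ≤ 2*ρ := (abs_sub _ _).trans (by linarith)
    gcongr
  -- sup bounds
  have hubd : ∀ s : ℝ, |u s| ≤ ε*(2/T + μP) := by
    intro s
    have h1 : |u s| ≤ |m| + |s₀| * (ε * (μ * |Real.cos (μ*s)|)) := by
      rw [hu]
      refine (abs_add_le _ _).trans ?_
      rw [abs_mul, abs_mul, abs_mul, abs_of_pos hε0, abs_of_pos hμ0]
      apply add_le_add_right
      apply le_of_eq; ring
    have h2 : |s₀| * (ε * (μ * |Real.cos (μ*s)|)) ≤ 1 * (ε * (μP * 1)) := by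
      gcongr
      exact Real.abs_cos_le_one _
    have h3 : |m| ≤ 2*ε/T := hmb.trans (by gcongr)
    calc |u s| ≤ 2*ε/T + 1*(ε*(μP*1)) := by linarith
      _ = ε*(2/T + μP) := by ring
  have hx₁bd : ∀ t ∈ Icc (0:ℝ) T, |x₁ t| ≤ 4*ε := by
    intro t ht
    have h1 : |a + m*t| ≤ 3*ρ := by
      have h0 : |a + m*t| ≤ |a| + |m| * |t| := (abs_add_le _ _).trans (by rw [abs_mul])
      have h1 : |t| ≤ T := by rw [abs_of_nonneg ht.1]; exact ht.2
      have h2 : |m| * |t| ≤ (2*ρ/T)*T := mul_le_mul hmb h1 (abs_nonneg _) (by positivity)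
      have h3 : (2*ρ/T)*T = 2*ρ := by field_simp
      linarith
    have h2 : |s₀*(ε*Real.sin (μ*t))| ≤ 1*(ε*1) := by
      rw [abs_mul, abs_mul, abs_of_pos hε0]
      gcongr
      exact Real.abs_sin_le_one _
    have h3 : |x₁ t| ≤ |a + m*t| + |s₀*(ε*Real.sin (μ*t))| := abs_add_le _ _
    have h4 : 3*ρ ≤ 3*ε := by linarith
    calc |x₁ t| ≤ 3*ρ + 1*(ε*1) := by linarith
      _ ≤ 4*ε := by linarith
  -- FTC for x₁
  have hderiv : ∀ x : ℝ, HasDerivAt x₁ (u x) x := by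
    intro x
    have h1 : HasDerivAt (fun t : ℝ => a + m*t) m x := by
      simpa using ((hasDerivAt_id x).const_mul m).const_add a
    have h2 : HasDerivAt (fun t : ℝ => Real.sin (μ*t)) (Real.cos (μ*x) * μ) x := by
      have := (Real.hasDerivAt_sin (μ*x)).comp x ((hasDerivAt_id x).const_mul μ)
      simpa [mul_comm, Function.comp_def] using this
    have h3 := h1.add (h2.const_mul (s₀*ε))
    have hfun : x₁ = fun t => (a + m*t) + (s₀*ε)*Real.sin (μ*t) := by
      rw [hx₁]; funext t; ring
    rw [hfun]
    have e : u x = m + s₀ * ε * (Real.cos (μ*x) * μ) := by rw [hu]; ring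
    rw [e]; exact h3
  have hFTC : ∀ t : ℝ, (∫ s in (0:ℝ)..t, u s) = x₁ t - x₁ 0 :=
    fun t => intervalIntegral.integral_eq_sub_of_hasDerivAt
      (fun s _ => hderiv s) (hucont.intervalIntegrable 0 t)
  -- boundary values
  have h10 : x₁ 0 = a := by rw [hx₁]; simp
  have h1T : x₁ T = c := by
    rw [hx₁]
    simp only [hμT, mul_zero]
    rw [hm]; field_simp; ring
  have h20 : x₂ 0 = b := by rw [hx₂]; simp
  have h2T : x₂ T = d := by
    have heq : (∫ s in (0:ℝ)..T, ((u s)^2 - (x₁ s)^2)) = d - b := hint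
    rw [hx₂]
    simp only [heq]; ring
  refine ⟨x₁, x₂, u, hx₁cont.continuousOn, hx₂cont.continuousOn, hucont.measurable,
    ⟨ε*(2/T + μP), ae_of_all _ (fun t => hubd t)⟩,
    hucont.intervalIntegrable 0 T, hfcont.intervalIntegrable 0 T,
    ?_, ?_, ?_, ?_⟩
  · intro t ht
    rw [hFTC t]; ring
  · intro t ht
    simp [hx₂, intervalIntegral.integral_same]
  · rw [h10, h1T, h20, h2T]
  · intro t ht
    constructor
    · have h1 := hx₁bd t ht
      have : 4*ε ≤ 4*(δ/5) := by linarith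
      linarith
    · have hbd : |∫ s in (0:ℝ)..t, ((u s)^2 - (x₁ s)^2)| ≤ (ε^2*K) * |t - 0| := by
        have key := intervalIntegral.norm_integral_le_of_norm_le_const (a := (0:ℝ)) (b := t)
          (C := ε^2*K) (f := fun s => (u s)^2 - (x₁ s)^2) ?_
        · rw [← Real.norm_eq_abs]; exact key
        intro s hs
        have hsub : s ∈ Icc (0:ℝ) T := by
          rw [uIoc_of_le ht.1] at hs
          exact ⟨le_of_lt hs.1, hs.2.trans ht.2⟩
        have h1 := hubd s
        have h2 := hx₁bd s hsub
        simp only [Real.norm_eq_abs]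
        have e1 : (u s)^2 ≤ (ε*(2/T + μP))^2 := by
          rw [← sq_abs]; exact pow_le_pow_left₀ (abs_nonneg _) h1 2
        have e2 : (x₁ s)^2 ≤ (4*ε)^2 := by
          rw [← sq_abs]; exact pow_le_pow_left₀ (abs_nonneg _) h2 2
        have e3 : |(u s)^2 - (x₁ s)^2| ≤ (u s)^2 + (x₁ s)^2 := by
          have h := abs_sub ((u s)^2) ((x₁ s)^2)
          rw [abs_of_nonneg (sq_nonneg (u s)), abs_of_nonneg (sq_nonneg (x₁ s))] at h
          exact h
        have e4 : (ε*(2/T + μP))^2 + (4*ε)^2 = ε^2*K := by rw [hK]; ring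
        calc |(u s)^2 - (x₁ s)^2| ≤ (u s)^2 + (x₁ s)^2 := e3
          _ ≤ (ε*(2/T + μP))^2 + (4*ε)^2 := add_le_add e1 e2
          _ = ε^2*K := e4
      have h1 : |t - 0| ≤ T := by
        rw [sub_zero, abs_of_nonneg ht.1]; exact ht.2
      have h2 : |x₂ t| ≤ |b| + (ε^2*K)*T := by
        have h3 : |x₂ t| ≤ |b| + |∫ s in (0:ℝ)..t, ((u s)^2 - (x₁ s)^2)| := by
          rw [hx₂]; exact abs_add_le _ _
        have h4 : (ε^2*K) * |t - 0| ≤ (ε^2*K)*T := by gcongr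
        linarith
      have h5 : ε^2*K*T ≤ ε*(K*T) := by
        have : ε*ε ≤ 1*ε := by nlinarith
        nlinarith [mul_pos hK0 hT0]
      have h6 : ε*(2*(1+T*K)) ≤ δ := by
        rw [le_div_iff₀ (by positivity : (0:ℝ) < 2*(1+T*K))] at hεK
        exact hεK
      linarith [mul_pos hε0 (mul_pos hT0 hK0)]
end

section
/- Example 2, case a < −2: Let a < −2. The control dynamical system ẋ₁(t) = u(t), ẋ₂(t) = u(t)³, u(t) ∈ (a,+∞) for a.e. t ∈ [0,1], with boundary conditions x₁(0) = x₂(0) = 0 and x₁(1) = x₂(1) = 1, is locally controllable with respect to the admissible process given by x̂₁(t) = x̂₂(t) = t and û(t) = 1 for t ∈ [0,1]. -/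
open MeasureTheory Set intervalIntegral

noncomputable def stp (s s' P Q R : ℝ) : ℝ → ℝ :=
  fun t => if t ≤ s then P else if t ≤ s + s' then Q else R

lemma stp_measurable (s s' P Q R : ℝ) : Measurable (stp s s' P Q R) := by
  unfold stp
  exact Measurable.ite measurableSet_Iic measurable_const
    (Measurable.ite measurableSet_Iic measurable_const measurable_const)

lemma stp_abs_le (s s' P Q R : ℝ) (t : ℝ) :
    |stp s s' P Q R t| ≤ |P| + |Q| + |R| := by
  unfold stp
  have h1 := abs_nonneg P; have h2 := abs_nonneg Q; have h3 := abs_nonneg R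
  split_ifs <;> linarith

lemma stp_integrableOn (s s' P Q R : ℝ) {S : Set ℝ} (hS : volume S < ⊤) :
    IntegrableOn (stp s s' P Q R) S := by
  refine Integrable.mono' (g := fun _ => |P| + |Q| + |R|)
    (integrableOn_const hS.ne)
    ((stp_measurable s s' P Q R).aestronglyMeasurable) ?_
  exact ae_of_all _ fun t => by simpa [Real.norm_eq_abs] using stp_abs_le s s' P Q R t

lemma stp_intervalIntegrable (s s' P Q R : ℝ) (c d : ℝ) :
    IntervalIntegrable (stp s s' P Q R) volume c d := by
  constructor <;>
  · apply stp_integrableOn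
    rw [Real.volume_Ioc]; exact ENNReal.ofReal_lt_top

lemma stp_integral (s s' P Q R : ℝ) (hs : 0 ≤ s) (hs' : 0 ≤ s') (hss : s + s' ≤ 1) :
    ∫ t in (0:ℝ)..1, stp s s' P Q R t = s*P + s'*Q + (1-s-s')*R := by
  have hii : ∀ c d : ℝ, IntervalIntegrable (stp s s' P Q R) volume c d :=
    stp_intervalIntegrable s s' P Q R
  have e1 : ∫ t in (0:ℝ)..s, stp s s' P Q R t = s * P := by
    rw [intervalIntegral.integral_congr (g := fun _ => P), intervalIntegral.integral_const, smul_eq_mul]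
    · ring
    · intro t ht
      rw [uIcc_of_le hs] at ht
      simp only [stp, if_pos ht.2]
  have e2 : ∫ t in s..(s+s'), stp s s' P Q R t = s' * Q := by
    rw [intervalIntegral.integral_congr_ae (g := fun _ => Q), intervalIntegral.integral_const, smul_eq_mul]
    · ring
    · refine ae_of_all _ fun t ht => ?_
      rw [uIoc_of_le (by linarith : s ≤ s + s')] at ht
      simp only [stp, if_neg (not_le.2 ht.1), if_pos ht.2]
  have e3 : ∫ t in (s+s')..1, stp s s' P Q R t = (1-s-s') * R := by
    rw [intervalIntegral.integral_congr_ae (g := fun _ => R), intervalIntegral.integral_const, smul_eq_mul]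
    · ring
    · refine ae_of_all _ fun t ht => ?_
      rw [uIoc_of_le (by linarith : s + s' ≤ 1)] at ht
      have h1 : ¬ t ≤ s := by push_neg; linarith [ht.1]
      have h2 : ¬ t ≤ s + s' := not_le.2 ht.1
      simp only [stp, if_neg h1, if_neg h2]
  have A1 := integral_add_adjacent_intervals (hii 0 s) (hii s (s+s'))
  have A2 := integral_add_adjacent_intervals (hii 0 (s+s')) (hii (s+s') 1)
  rw [← A2, ← A1, e1, e2, e3]

lemma bump (a δ y11 y12 y21 y22 A B p q s s' : ℝ)
    (hs : 0 ≤ s) (hs' : 0 ≤ s') (hss : s + s' ≤ 1)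
    (hpa : a < p) (hqa : a < q) (hAa : a < A)
    (hE1 : s*(p - A) + s'*(q - A) = 0)
    (hE2 : s*(p^3 - A^3) + s'*(q^3 - A^3) = B - A^3)
    (hend1 : y11 + A = 1 + y21) (hend2 : y12 + B = 1 + y22)
    (hdev1 : |y11| + (s*|p-1| + s'*|q-1| + |A-1|) < δ)
    (hdev2 : |y12| + (s*|p^3-1| + s'*|q^3-1| + |A^3-1|) < δ) :
    ∃ x₁ x₂ u : ℝ → ℝ,
      ContinuousOn x₁ (Icc (0:ℝ) 1) ∧ ContinuousOn x₂ (Icc (0:ℝ) 1) ∧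
      Measurable u ∧
      (∃ C : ℝ, ∀ᵐ t ∂(volume.restrict (Icc (0:ℝ) 1)), |u t| ≤ C) ∧
      (∀ᵐ t ∂(volume.restrict (Icc (0:ℝ) 1)), a < u t) ∧
      IntervalIntegrable u volume 0 1 ∧
      IntervalIntegrable (fun s => (u s) ^ 3) volume 0 1 ∧
      (∀ t ∈ Icc (0:ℝ) 1, x₁ t = x₁ 0 + ∫ s in (0:ℝ)..t, u s) ∧
      (∀ t ∈ Icc (0:ℝ) 1, x₂ t = x₂ 0 + ∫ s in (0:ℝ)..t, (u s) ^ 3) ∧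
      (x₁ 0, x₂ 0) = (y11, y12) ∧ (x₁ 1, x₂ 1) = (1 + y21, 1 + y22) ∧
      (∀ t ∈ Icc (0:ℝ) 1, |x₁ t - t| < δ ∧ |x₂ t - t| < δ) := by
  set u : ℝ → ℝ := stp s s' p q A with hu
  have hcube : (fun t => (u t)^3) = stp s s' (p^3) (q^3) (A^3) := by
    funext t; simp only [hu, stp]; split_ifs <;> rfl
  set x₁ : ℝ → ℝ := fun t => y11 + ∫ τ in (0:ℝ)..t, u τ with hx₁
  set x₂ : ℝ → ℝ := fun t => y12 + ∫ τ in (0:ℝ)..t, (u τ)^3 with hx₂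
  have hii : ∀ (P Q R c d : ℝ), IntervalIntegrable (stp s s' P Q R) volume c d :=
    fun P Q R c d => stp_intervalIntegrable s s' P Q R c d
  have key : ∀ (P Q R : ℝ), ∀ t ∈ Icc (0:ℝ) 1,
      |∫ τ in (0:ℝ)..t, stp s s' P Q R τ| ≤ s*|P| + s'*|Q| + |R| := by
    intro P Q R t ht
    have habs : (fun τ => |stp s s' P Q R τ|) = stp s s' |P| |Q| |R| := by
      funext τ; simp only [stp]; split_ifs <;> rfl
    have h1 : |∫ τ in (0:ℝ)..t, stp s s' P Q R τ| ≤
        ∫ τ in (0:ℝ)..t, |stp s s' P Q R τ| :=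
      intervalIntegral.abs_integral_le_integral_abs ht.1
    have h2 : ∫ τ in (0:ℝ)..t, |stp s s' P Q R τ| ≤
        ∫ τ in (0:ℝ)..1, |stp s s' P Q R τ| := by
      simp only [habs]
      refine intervalIntegral.integral_mono_interval le_rfl ht.1 ht.2 ?_ (hii _ _ _ 0 1)
      refine ae_of_all _ fun τ => ?_
      have h5 : stp s s' |P| |Q| |R| τ = |stp s s' P Q R τ| := by
        simp only [stp]; split_ifs <;> rfl
      rw [h5]; exact abs_nonneg _
    have h3 : ∫ τ in (0:ℝ)..1, |stp s s' P Q R τ| = s*|P| + s'*|Q| + (1-s-s')*|R| := by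
      rw [habs]; exact stp_integral s s' _ _ _ hs hs' hss
    have h4 : (1-s-s')*|R| ≤ |R| := by
      have := abs_nonneg R; nlinarith
    linarith
  have int1 : ∀ t : ℝ, t ∈ Icc (0:ℝ) 1 → |(∫ τ in (0:ℝ)..t, u τ) - t| ≤
      s*|p-1| + s'*|q-1| + |A-1| := by
    intro t ht
    have hsub : (fun τ => u τ - 1) = stp s s' (p-1) (q-1) (A-1) := by
      funext τ; simp only [hu, stp]; split_ifs <;> rfl
    have heq : ∫ τ in (0:ℝ)..t, (u τ - 1) = (∫ τ in (0:ℝ)..t, u τ) - t := by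
      rw [intervalIntegral.integral_sub (hii p q A 0 t) intervalIntegrable_const]
      simp
      rfl
    rw [← heq]
    have h := key (p-1) (q-1) (A-1) t ht
    rw [← hsub] at h
    exact h
  have int3 : ∀ t : ℝ, t ∈ Icc (0:ℝ) 1 → |(∫ τ in (0:ℝ)..t, (u τ)^3) - t| ≤
      s*|p^3-1| + s'*|q^3-1| + |A^3-1| := by
    intro t ht
    have hsub : (fun τ => (u τ)^3 - 1) = stp s s' (p^3-1) (q^3-1) (A^3-1) := by
      funext τ; simp only [hu, stp]; split_ifs <;> rfl
    have hi3 : IntervalIntegrable (fun τ => (u τ)^3) volume 0 t := by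
      rw [hcube]; exact hii _ _ _ 0 t
    have heq : ∫ τ in (0:ℝ)..t, ((u τ)^3 - 1) = (∫ τ in (0:ℝ)..t, (u τ)^3) - t := by
      rw [intervalIntegral.integral_sub hi3 intervalIntegrable_const]
      simp
    rw [← heq]
    have h := key (p^3-1) (q^3-1) (A^3-1) t ht
    rw [← hsub] at h
    exact h
  have hfull1 : ∫ τ in (0:ℝ)..1, u τ = A := by
    rw [hu, stp_integral s s' p q A hs hs' hss]
    linear_combination hE1
  have hfull3 : ∫ τ in (0:ℝ)..1, (u τ)^3 = B := by
    have h := stp_integral s s' (p^3) (q^3) (A^3) hs hs' hss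
    rw [← hcube] at h
    rw [h]; linear_combination hE2
  have hIccfin : volume (Icc (0:ℝ) 1) < ⊤ := by
    rw [Real.volume_Icc]; exact ENNReal.ofReal_lt_top
  have hcont1 : ContinuousOn x₁ (Icc (0:ℝ) 1) := by
    have h := intervalIntegral.continuousOn_primitive_interval (a := (0:ℝ)) (b := (1:ℝ))
      (f := u) (μ := volume) (by rw [uIcc_of_le zero_le_one]; exact stp_integrableOn _ _ _ _ _ hIccfin)
    rw [uIcc_of_le (zero_le_one : (0:ℝ) ≤ 1)] at h
    exact continuousOn_const.add h
  have hcont2 : ContinuousOn x₂ (Icc (0:ℝ) 1) := by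
    have h := intervalIntegral.continuousOn_primitive_interval (a := (0:ℝ)) (b := (1:ℝ))
      (f := fun τ => (u τ)^3) (μ := volume)
      (by rw [uIcc_of_le zero_le_one, hcube]; exact stp_integrableOn _ _ _ _ _ hIccfin)
    rw [uIcc_of_le (zero_le_one : (0:ℝ) ≤ 1)] at h
    exact continuousOn_const.add h
  have hx₁0 : x₁ 0 = y11 := by simp [hx₁]
  have hx₂0 : x₂ 0 = y12 := by simp [hx₂]
  refine ⟨x₁, x₂, u, hcont1, hcont2, stp_measurable s s' p q A,
    ⟨|p| + |q| + |A|, ae_of_all _ fun t => stp_abs_le s s' p q A t⟩,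
    ae_of_all _ fun t => ?_, hii p q A 0 1, by rw [hcube]; exact hii _ _ _ 0 1,
    ?_, ?_, ?_, ?_, ?_⟩
  · simp only [hu, stp]; split_ifs <;> assumption
  · intro t ht; rw [hx₁0]
  · intro t ht; rw [hx₂0]
  · rw [hx₁0, hx₂0]
  · have e1 : x₁ 1 = 1 + y21 := by
      simp only [hx₁, hfull1]; linarith
    have e2 : x₂ 1 = 1 + y22 := by
      simp only [hx₂, hfull3]; linarith
    rw [e1, e2]
  · intro t ht
    constructor
    · have h := int1 t ht
      have e : x₁ t - t = y11 + ((∫ τ in (0:ℝ)..t, u τ) - t) := by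
        simp only [hx₁]; ring
      rw [e]
      calc |y11 + ((∫ τ in (0:ℝ)..t, u τ) - t)| ≤ |y11| + |(∫ τ in (0:ℝ)..t, u τ) - t| :=
            abs_add_le _ _
        _ < δ := by linarith
    · have h := int3 t ht
      have e : x₂ t - t = y12 + ((∫ τ in (0:ℝ)..t, (u τ)^3) - t) := by
        simp only [hx₂]; ring
      rw [e]
      calc |y12 + ((∫ τ in (0:ℝ)..t, (u τ)^3) - t)| ≤ |y12| + |(∫ τ in (0:ℝ)..t, (u τ)^3) - t| :=
            abs_add_le _ _
        _ < δ := by linarith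

set_option maxHeartbeats 1000000 in
/-- **Example 2, case `a < −2`.**  The system `ẋ₁ = u`, `ẋ₂ = u³`, `u(t) ∈ (a,+∞)` a.e.
on `[0,1]`, with boundary conditions `x(0) = (0,0)`, `x(1) = (1,1)`, is locally controllable
with respect to the admissible process `x̂₁(t)=x̂₂(t)=t`, `û(t)=1`. -/
theorem example2_locally_controllable (a : ℝ) (ha : a < -2) :
    ∀ δ > (0:ℝ), ∃ ρ > (0:ℝ),
      ∀ y : (ℝ × ℝ) × (ℝ × ℝ), ‖y‖ < ρ →
        ∃ x₁ x₂ u : ℝ → ℝ,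
          ContinuousOn x₁ (Icc (0:ℝ) 1) ∧ ContinuousOn x₂ (Icc (0:ℝ) 1) ∧
          Measurable u ∧
          (∃ C : ℝ, ∀ᵐ t ∂(volume.restrict (Icc (0:ℝ) 1)), |u t| ≤ C) ∧
          (∀ᵐ t ∂(volume.restrict (Icc (0:ℝ) 1)), a < u t) ∧
          IntervalIntegrable u volume 0 1 ∧
          IntervalIntegrable (fun s => (u s) ^ 3) volume 0 1 ∧
          (∀ t ∈ Icc (0:ℝ) 1, x₁ t = x₁ 0 + ∫ s in (0:ℝ)..t, u s) ∧
          (∀ t ∈ Icc (0:ℝ) 1, x₂ t = x₂ 0 + ∫ s in (0:ℝ)..t, (u s) ^ 3) ∧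
          (x₁ 0, x₂ 0) = y.1 ∧ (x₁ 1, x₂ 1) = ((1:ℝ), (1:ℝ)) + y.2 ∧
          (∀ t ∈ Icc (0:ℝ) 1, |x₁ t - t| < δ ∧ |x₂ t - t| < δ) := by
  intro δ hδ
  set K : ℝ := 1 - a with hK_def
  set ε : ℝ := -a - 2 with hε_def
  have hK : 3 < K := by rw [hK_def]; linarith only [ha]
  have hε : 0 < ε := by rw [hε_def]; linarith only [ha]
  have hεc : ε = K - 3 := by rw [hε_def, hK_def]; ring
  have ha2 : a = 1 - K := by rw [hK_def]; ring
  have hKcube : 9*K ≤ K^3 := by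
    nlinarith only [mul_pos (mul_pos (show (0:ℝ) < K by linarith only [hK])
      (show (0:ℝ) < K - 3 by linarith only [hK])) (show (0:ℝ) < K + 3 by linarith only [hK]), hK]
  have hD : 0 < 8*ε + 126*K^3 := by nlinarith only [hKcube, hK, hε]
  set ρ : ℝ := min (min (1/16) (ε/32)) (min (ε^2/288) (δ*ε/(8*ε+126*K^3))) with hρ_def
  have hρpos : 0 < ρ := by
    refine lt_min (lt_min (by norm_num) (by positivity)) (lt_min (by positivity) ?_)
    exact div_pos (mul_pos hδ hε) hD
  have hρ1 : ρ ≤ 1/16 := le_trans (min_le_left _ _) (min_le_left _ _)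
  have hρ2 : ρ ≤ ε/32 := le_trans (min_le_left _ _) (min_le_right _ _)
  have hρ3 : ρ ≤ ε^2/288 := le_trans (min_le_right _ _) (min_le_left _ _)
  have hρ4 : ρ ≤ δ*ε/(8*ε+126*K^3) := le_trans (min_le_right _ _) (min_le_right _ _)
  have hmaster : ρ*(8*ε+126*K^3) ≤ δ*ε := (le_div_iff₀ hD).mp hρ4
  clear_value K ε ρ
  clear hρ4 hρ_def
  refine ⟨ρ, hρpos, ?_⟩
  rintro ⟨⟨y11, y12⟩, y21, y22⟩ hy
  simp only [Prod.norm_def, Real.norm_eq_abs, max_lt_iff] at hy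
  obtain ⟨⟨hn1, hn2⟩, hn3, hn4⟩ := hy
  obtain ⟨hn1a, hn1b⟩ := abs_lt.mp hn1
  obtain ⟨hn2a, hn2b⟩ := abs_lt.mp hn2
  obtain ⟨hn3a, hn3b⟩ := abs_lt.mp hn3
  obtain ⟨hn4a, hn4b⟩ := abs_lt.mp hn4
  set A : ℝ := 1 + y21 - y11 with hA_def
  set B : ℝ := 1 + y22 - y12 with hB_def
  have hAl : 7/8 < A := by rw [hA_def]; linarith only [hn1b, hn3a, hρ1]
  have hAu : A < 9/8 := by rw [hA_def]; linarith only [hn1a, hn3b, hρ1]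
  have hAlo : 1 - 2*ρ < A := by rw [hA_def]; linarith only [hn1b, hn3a]
  have hAhi : A < 1 + 2*ρ := by rw [hA_def]; linarith only [hn1a, hn3b]
  have hBlo : 1 - 2*ρ < B := by rw [hB_def]; linarith only [hn2b, hn4a]
  have hBhi : B < 1 + 2*ρ := by rw [hB_def]; linarith only [hn2a, hn4b]
  have hend1 : y11 + A = 1 + y21 := by rw [hA_def]; ring
  have hend2 : y12 + B = 1 + y22 := by rw [hB_def]; ring
  clear_value A B
  have hA1 : |A - 1| ≤ 2*ρ :=
    abs_le.mpr ⟨by linarith only [hAlo], by linarith only [hAhi]⟩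
  have hrr : (0:ℝ) ≤ (1/16 - ρ)*ρ := mul_nonneg (by linarith only [hρ1]) hρpos.le
  have hd1 : -(2*ρ) ≤ A - 1 := by linarith only [hAlo]
  have hd2 : A - 1 ≤ 2*ρ := by linarith only [hAhi]
  have hsq : (A-1)^2 ≤ ρ/4 := by
    nlinarith only [mul_nonneg (show (0:ℝ) ≤ 2*ρ - (A-1) by linarith only [hd2])
      (show (0:ℝ) ≤ 2*ρ + (A-1) by linarith only [hd1]), hrr]
  have hc1 : (A-1)^3 ≤ ρ/32 := by
    nlinarith only [mul_le_mul_of_nonneg_right hd2 (sq_nonneg (A-1)),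
      mul_le_mul_of_nonneg_left hsq (show (0:ℝ) ≤ 2*ρ by linarith only [hρpos]), hrr]
  have hc2 : -(ρ/32) ≤ (A-1)^3 := by
    nlinarith only [mul_le_mul_of_nonneg_right hd1 (sq_nonneg (A-1)),
      mul_le_mul_of_nonneg_left hsq (show (0:ℝ) ≤ 2*ρ by linarith only [hρpos]), hrr]
  have hA3 : |A^3 - 1| ≤ 7*ρ := by
    refine abs_le.mpr ⟨?_, ?_⟩ <;>
      nlinarith only [hc1, hc2, hsq, hd1, hd2, hρpos]
  have hA3' := abs_le.mp hA3
  rcases le_or_gt (A^3) B with hcase | hcase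
  · -- easy case : B ≥ A³, use the bumps A+1, A-1
    set s : ℝ := (B - A^3)/(6*A) with hs_def
    have h6A : (0:ℝ) < 6*A := by linarith only [hAl]
    have hs0 : 0 ≤ s := div_nonneg (by linarith only [hcase]) (by linarith only [h6A])
    have hsmul : s*(6*A) = B - A^3 := div_mul_cancel₀ _ (ne_of_gt h6A)
    clear_value s
    have hsle : s ≤ 2*ρ := by
      nlinarith only [hsmul, mul_nonneg hs0 (show (0:ℝ) ≤ 6*A - 21/4 by linarith only [hAl]),
        hA3'.1, hBhi, hs0, hρpos]
    have h34 : 34*ρ ≤ δ := by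
      have h0 : (0:ℝ) ≤ 126*K^3 - 26*ε := by
        rw [hεc]; nlinarith only [hKcube, hK]
      have h1 : 34*ρ*ε ≤ δ*ε := by
        nlinarith only [hmaster, mul_nonneg hρpos.le h0]
      exact le_of_mul_le_mul_right h1 hε
    have hpabs : |A + 1 - 1| ≤ 9/8 :=
      abs_le.mpr ⟨by linarith only [hAl], by linarith only [hAu]⟩
    have hqabs : |A - 1 - 1| ≤ 9/8 :=
      abs_le.mpr ⟨by linarith only [hAl], by linarith only [hAu]⟩
    have he2 : (A-1)^2 ≤ 1/64 := by
      nlinarith only [hAl, hAu, sq_nonneg (A-1)]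
    have hApos : (0:ℝ) < A + 1 := by linarith only [hAl]
    have hp3abs : |(A+1)^3 - 1| ≤ 9 := by
      refine abs_le.mpr ⟨?_, ?_⟩
      · nlinarith only [mul_pos (mul_pos hApos hApos) hApos]
      · nlinarith only [hAl, hAu, sq_nonneg (A+1)]
    have hq3abs : |(A-1)^3 - 1| ≤ 2 := by
      refine abs_le.mpr ⟨?_, ?_⟩
      · nlinarith only [he2, hd1, hd2, hρ1, hρpos]
      · nlinarith only [he2, hd1, hd2, hρ1, hρpos]
    have hdev1 : |y11| + (s*|A + 1 - 1| + s*|A - 1 - 1| + |A - 1|) < δ := by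
      nlinarith only [hn1, hA1, h34, hρpos,
        mul_le_mul hsle hpabs (abs_nonneg _) (by linarith only [hρpos]),
        mul_le_mul hsle hqabs (abs_nonneg _) (by linarith only [hρpos])]
    have hdev2 : |y12| + (s*|(A+1)^3 - 1| + s*|(A-1)^3 - 1| + |A^3 - 1|) < δ := by
      nlinarith only [hn2, hA3, h34, hρpos,
        mul_le_mul hsle hp3abs (abs_nonneg _) (by linarith only [hρpos]),
        mul_le_mul hsle hq3abs (abs_nonneg _) (by linarith only [hρpos])]
    have hmain := bump a δ y11 y12 y21 y22 A B (A+1) (A-1) s s hs0 hs0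
      (by linarith only [hs0, hsle, hρ1]) (by linarith only [ha, hAl])
      (by linarith only [ha, hAl]) (by linarith only [ha, hAl])
      (by ring) (by linear_combination hsmul)
      hend1 hend2 hdev1 hdev2
    simpa only [Prod.mk_add_mk] using hmain
  · -- hard case : B < A³, use a deep bump near a
    set H : ℝ := A - a - ε/4 with hH_def
    set G : ℝ := (A - a)*(2 + ε/2 - 2*A) with hG_def
    set N : ℝ := A^3 - B with hN_def
    have hNpos : 0 < N := by rw [hN_def]; linarith only [hcase]
    have hN9 : N < 9*ρ := by rw [hN_def]; linarith only [hA3'.2, hBlo]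
    have hd : 3*ε/8 ≤ 2 + ε/2 - 2*A := by linarith only [hρ2, hAhi]
    have hHge : 2 ≤ H := by rw [hH_def, ha2, hεc]; linarith only [hAl, hK]
    have hHpos : 0 < H := by linarith only [hHge]
    have hGge : 3*ε/4 ≤ G := by
      rw [hG_def]
      have hAa2 : 2 ≤ A - a := by rw [ha2]; linarith only [hAl, hK]
      nlinarith only [hd, hAa2, hε]
    have hGpos : 0 < G := by linarith only [hGge, hε]
    set s : ℝ := N/(G*H) with hs_def
    set s' : ℝ := N/(G*(ε/4)) with hs'_def
    have hs0 : 0 ≤ s := le_of_lt (div_pos hNpos (mul_pos hGpos hHpos))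
    have hs'0 : 0 ≤ s' := le_of_lt (div_pos hNpos (mul_pos hGpos (by linarith only [hε])))
    have hsGH : s*(G*H) = N := div_mul_cancel₀ _ (ne_of_gt (mul_pos hGpos hHpos))
    have hs'G : s'*(G*(ε/4)) = N :=
      div_mul_cancel₀ _ (ne_of_gt (mul_pos hGpos (by linarith only [hε])))
    have hsH : s*H = N/G := by rw [hs_def]; field_simp
    have hs'q : s'*(ε/4) = N/G := by rw [hs'_def]; field_simp
    clear_value H G N s s'
    have hGH : 3*ε/2 ≤ G*H := by nlinarith only [hGge, hHge, hε]
    have hsε : s*ε ≤ 6*ρ := by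
      nlinarith only [hsGH, mul_nonneg hs0 (show (0:ℝ) ≤ G*H - 3*ε/2 by linarith only [hGH]),
        hN9, hs0, hρpos]
    have hGε : 3*ε^2/16 ≤ G*(ε/4) := by nlinarith only [hGge, hε]
    have hs'ε2 : s'*ε^2 ≤ 48*ρ := by
      nlinarith only [hs'G,
        mul_nonneg hs'0 (show (0:ℝ) ≤ G*(ε/4) - 3*ε^2/16 by linarith only [hGε]),
        hN9, hs'0, hρpos]
    have hsle : s ≤ 3/16 := by
      nlinarith only [hsε, hρ2, hε, mul_pos hε hε]
    have hs'le : s' ≤ 1/6 := by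
      nlinarith only [hs'ε2, hρ3, hε, sq_nonneg ε, mul_pos hε hε]
    have hss : s + s' ≤ 1 := by linarith only [hsle, hs'le]
    have hE1 : s*((a + ε/4) - A) + s'*((A + ε/4) - A) = 0 := by
      have h1 : (a + ε/4) - A = -H := by rw [hH_def]; ring
      have h2 : (A + ε/4) - A = ε/4 := by ring
      rw [h1, h2]
      linear_combination (-1 : ℝ)*hsH + hs'q
    set X : ℝ := 3*A^2 - 3*A*H + H^2 with hX_def
    set Y : ℝ := 3*A^2 + 3*A*(ε/4) + (ε/4)^2 with hY_def
    have hp3 : (a + ε/4)^3 - A^3 = -H*X := by rw [hX_def, hH_def]; ring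
    have hq3 : (A + ε/4)^3 - A^3 = (ε/4)*Y := by rw [hY_def]; ring
    have hYX : Y - X = -G := by rw [hX_def, hY_def, hG_def, hH_def, hε_def]; ring
    clear_value X Y
    have hE2 : s*((a + ε/4)^3 - A^3) + s'*((A + ε/4)^3 - A^3) = B - A^3 := by
      rw [hp3, hq3]
      have hfin : s*(-H*X) + s'*((ε/4)*Y) = -(N/G)*X + (N/G)*Y := by
        linear_combination (-X)*hsH + Y*hs'q
      rw [hfin]
      calc -(N/G)*X + (N/G)*Y = (N/G)*(Y - X) := by ring
        _ = (N/G)*(-G) := by rw [hYX]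
        _ = -N := by field_simp
        _ = B - A^3 := by rw [hN_def]; ring
    -- deviation bounds
    have hpabs : |a + ε/4 - 1| ≤ K := by
      refine abs_le.mpr ⟨?_, ?_⟩ <;> rw [ha2, hεc] <;> linarith only [hK]
    have hqabs : |A + ε/4 - 1| ≤ ε/2 := by
      refine abs_le.mpr ⟨by linarith only [hρ2, hAlo, hε], by linarith only [hρ2, hAhi, hε]⟩
    have hp1 : a + ε/4 = (1 - 3*K)/4 := by rw [ha2, hεc]; ring
    have hK2 : 9 ≤ K^2 := by nlinarith only [hK]
    have hp3abs : |(a + ε/4)^3 - 1| ≤ 2*K^3 := by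
      rw [hp1]
      have h27 : (3*K - 1)^3 ≤ 27*K^3 := by
        nlinarith only [hK, hK2, sq_nonneg K, sq_nonneg (3*K-1), mul_pos (show (0:ℝ) < K by linarith only [hK]) (show (0:ℝ) < K by linarith only [hK])]
      have hpos : (0:ℝ) < (3*K - 1)^3 :=
        pow_pos (by linarith only [hK] : (0:ℝ) < 3*K - 1) 3
      have h3K : 3*K^2 ≤ K^3 := by
        nlinarith only [mul_le_mul_of_nonneg_left (show (3:ℝ) ≤ K by linarith only [hK])
          (sq_nonneg K)]
      refine abs_le.mpr ⟨?_, ?_⟩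
      · nlinarith only [h27, hKcube, hK, sq_nonneg K, h3K]
      · nlinarith only [h27, hKcube, hK, sq_nonneg K, h3K, hpos]
    have hqb : A + ε/4 ≤ K := by rw [hεc]; linarith only [hρ2, hAhi, hK, hεc]
    have hqpos : (0:ℝ) < A + ε/4 := by linarith only [hAl, hε]
    have hq3abs : |(A + ε/4)^3 - 1| ≤ (ε/2)*(3*K^2) := by
      have hfac : (A + ε/4)^3 - 1 = ((A + ε/4) - 1)*((A + ε/4)^2 + (A + ε/4) + 1) := by ring
      rw [hfac, abs_mul]
      have hpos2 : (0:ℝ) < (A + ε/4)^2 + (A + ε/4) + 1 := by positivity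
      have h2 : |(A + ε/4)^2 + (A + ε/4) + 1| ≤ 3*K^2 := by
        rw [abs_of_pos hpos2]
        nlinarith only [hqb, hqpos, hK, hK2,
          mul_le_mul hqb hqb hqpos.le (show (0:ℝ) ≤ K by linarith only [hK])]
      exact mul_le_mul hqabs h2 (abs_nonneg _) (by linarith only [hε])
    -- products times ε
    have t1ε : (s*|a + ε/4 - 1|)*ε ≤ 6*ρ*K := by
      nlinarith only [mul_le_mul hsε hpabs (abs_nonneg _)
          (show (0:ℝ) ≤ 6*ρ by linarith only [hρpos]),
        mul_nonneg hs0 (abs_nonneg (a + ε/4 - 1)), hε]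
    have t2ε : (s'*|A + ε/4 - 1|)*ε ≤ 24*ρ := by
      have h := mul_le_mul_of_nonneg_left hqabs hs'0
      calc (s'*|A + ε/4 - 1|)*ε ≤ (s'*(ε/2))*ε := mul_le_mul_of_nonneg_right h hε.le
        _ = (1/2)*(s'*ε^2) := by ring
        _ ≤ (1/2)*(48*ρ) := by linarith only [hs'ε2]
        _ = 24*ρ := by ring
    have t3ε : (s*|(a + ε/4)^3 - 1|)*ε ≤ 12*ρ*K^3 := by
      nlinarith only [mul_le_mul hsε hp3abs (abs_nonneg _)
          (show (0:ℝ) ≤ 6*ρ by linarith only [hρpos]),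
        mul_nonneg hs0 (abs_nonneg ((a + ε/4)^3 - 1)), hε]
    have t4ε : (s'*|(A + ε/4)^3 - 1|)*ε ≤ 72*ρ*K^2 := by
      have h := mul_le_mul_of_nonneg_left hq3abs hs'0
      calc (s'*|(A + ε/4)^3 - 1|)*ε ≤ (s'*((ε/2)*(3*K^2)))*ε :=
            mul_le_mul_of_nonneg_right h hε.le
        _ = (3*K^2/2)*(s'*ε^2) := by ring
        _ ≤ (3*K^2/2)*(48*ρ) := by
            have h32 : (0:ℝ) ≤ 3*K^2/2 := by positivity
            nlinarith only [hs'ε2, h32, mul_le_mul_of_nonneg_left hs'ε2 h32]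
        _ = 72*ρ*K^2 := by ring
    have hn1ε : |y11| * ε < ρ*ε := mul_lt_mul_of_pos_right hn1 hε
    have hn2ε : |y12| * ε < ρ*ε := mul_lt_mul_of_pos_right hn2 hε
    have hA1ε : |A - 1| * ε ≤ 2*ρ*ε := by
      nlinarith only [mul_le_mul_of_nonneg_right hA1 hε.le]
    have hA3ε : |A^3 - 1| * ε ≤ 7*ρ*ε := by
      nlinarith only [mul_le_mul_of_nonneg_right hA3 hε.le]
    have hslack1 : (0:ℝ) ≤ ρ*(5*ε + 126*K^3 - 6*K - 24) := by
      refine mul_nonneg hρpos.le ?_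
      rw [hεc]; nlinarith only [hKcube, hK]
    have hslack2 : (0:ℝ) ≤ ρ*(114*K^3 - 72*K^2) := by
      refine mul_nonneg hρpos.le ?_
      nlinarith only [hK, sq_nonneg K,
        mul_le_mul_of_nonneg_left (show (3:ℝ) ≤ K by linarith only [hK]) (sq_nonneg K)]
    have hdev1 : |y11| + (s*|a + ε/4 - 1| + s'*|A + ε/4 - 1| + |A - 1|) < δ := by
      have h1 : (|y11| + (s*|a + ε/4 - 1| + s'*|A + ε/4 - 1| + |A - 1|))*ε < δ*ε := by
        nlinarith only [t1ε, t2ε, hn1ε, hA1ε, hmaster, hslack1]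
      exact lt_of_mul_lt_mul_right h1 hε.le
    have hdev2 : |y12| + (s*|(a + ε/4)^3 - 1| + s'*|(A + ε/4)^3 - 1| + |A^3 - 1|) < δ := by
      have h1 : (|y12| + (s*|(a + ε/4)^3 - 1| + s'*|(A + ε/4)^3 - 1| + |A^3 - 1|))*ε < δ*ε := by
        nlinarith only [t3ε, t4ε, hn2ε, hA3ε, hmaster, hslack2]
      exact lt_of_mul_lt_mul_right h1 hε.le
    have hmain := bump a δ y11 y12 y21 y22 A B (a + ε/4) (A + ε/4) s s' hs0 hs'0 hss
      (by linarith only [hε]) (by linarith only [ha, hAl, hε]) (by linarith only [ha, hAl])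
      hE1 hE2 hend1 hend2 hdev1 hdev2
    simpa only [Prod.mk_add_mk] using hmain
end

section
/- Example 2, case a ≥ −2 (non-reachability): Let −2 ≤ a < 1 and ε > 0. There is no pair (x,u) with x ∈ AC([0,1],ℝ²) and u ∈ L∞([0,1],ℝ) such that ẋ₁(t) = u(t), ẋ₂(t) = u(t)³ and u(t) ∈ (a,+∞) for a.e. t ∈ [0,1], x(0) = (0,0), and x(1) = (1, 1−ε). -/
open MeasureTheory Set intervalIntegral

/-- **Example 2, case `a ≥ −2` (non-reachability).**
For `−2 ≤ a < 1` and `ε > 0` there is no pair `(x,u)` with `x ∈ AC([0,1],ℝ²)`,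
`u ∈ L∞([0,1],ℝ)` such that `ẋ₁ = u`, `ẋ₂ = u³`, `u(t) ∈ (a,+∞)` a.e.,
`x(0) = (0,0)` and `x(1) = (1, 1−ε)`. -/
theorem example2_nonreachability (a ε : ℝ) (ha : -2 ≤ a) (ha1 : a < 1) (hε : 0 < ε) :
    ¬ ∃ (x₁ x₂ u : ℝ → ℝ),
      ContinuousOn x₁ (Icc (0:ℝ) 1) ∧ ContinuousOn x₂ (Icc (0:ℝ) 1) ∧
      Measurable u ∧
      (∃ C : ℝ, ∀ᵐ t ∂(volume.restrict (Icc (0:ℝ) 1)), |u t| ≤ C) ∧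
      (∀ᵐ t ∂(volume.restrict (Icc (0:ℝ) 1)), a < u t) ∧
      IntervalIntegrable u volume 0 1 ∧
      IntervalIntegrable (fun t => (u t) ^ 3) volume 0 1 ∧
      (∀ t ∈ Icc (0:ℝ) 1, x₁ t = x₁ 0 + ∫ s in (0:ℝ)..t, u s) ∧
      (∀ t ∈ Icc (0:ℝ) 1, x₂ t = x₂ 0 + ∫ s in (0:ℝ)..t, (u s) ^ 3) ∧
      x₁ 0 = 0 ∧ x₂ 0 = 0 ∧ x₁ 1 = 1 ∧ x₂ 1 = 1 - ε := by
  rintro ⟨x₁, x₂, u, -, -, -, -, hbound, hu_int, hu3_int,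
    hx₁, hx₂, h0₁, h0₂, h1₁, h1₂⟩
  have hI1 : (∫ s in (0:ℝ)..1, u s) = 1 := by
    have := hx₁ 1 (by norm_num)
    rw [h0₁, h1₁] at this; linarith
  have hI2 : (∫ s in (0:ℝ)..1, (u s) ^ 3) = 1 - ε := by
    have := hx₂ 1 (by norm_num)
    rw [h0₂, h1₂] at this; linarith
  -- pointwise: u³ ≥ 3u − 2 since (u−1)²(u+2) ≥ 0
  have hmono : (∫ s in (0:ℝ)..1, (3 * u s - 2)) ≤ ∫ s in (0:ℝ)..1, (u s) ^ 3 := by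
    apply intervalIntegral.integral_mono_ae_restrict (by norm_num)
    · exact (hu_int.const_mul 3).sub (intervalIntegrable_const)
    · exact hu3_int
    · filter_upwards [hbound] with t ht
      nlinarith [sq_nonneg (u t - 1), sq_nonneg (u t + 2)]
  have hlin : (∫ s in (0:ℝ)..1, (3 * u s - 2)) = 1 := by
    rw [intervalIntegral.integral_sub (hu_int.const_mul 3) intervalIntegrable_const,
      intervalIntegral.integral_const_mul, hI1]
    norm_num
  rw [hlin, hI2] at hmono
  linarith
end

section
/- Example 2, case a ≥ −2 (failure of local controllability): Let −2 ≤ a < 1. The control dynamical system ẋ₁(t) = u(t), ẋ₂(t) = u(t)³, u(t) ∈ (a,+∞) for a.e. t ∈ [0,1], with boundary conditions x₁(0) = x₂(0) = 0 and x₁(1) = x₂(1) = 1, is NOT locally controllable with respect to the admissible process given by x̂₁(t) = x̂₂(t) = t and û(t) = 1 for t ∈ [0,1]. -/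
open MeasureTheory Set intervalIntegral

/-- **Example 2, case `−2 ≤ a < 1` (failure of local controllability).**
The system `ẋ₁ = u`, `ẋ₂ = u³`, `u(t) ∈ (a,+∞)` a.e. on `[0,1]`, with boundary
conditions `x(0) = (0,0)`, `x(1) = (1,1)`, is NOT locally controllable with respect to
the admissible process `x̂₁(t)=x̂₂(t)=t`, `û(t)=1`. -/
theorem example2_not_locally_controllable (a : ℝ) (ha : -2 ≤ a) (ha1 : a < 1) :
    ¬ (∀ δ > (0:ℝ), ∃ ρ > (0:ℝ),
      ∀ y : (ℝ × ℝ) × (ℝ × ℝ), ‖y‖ < ρ →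
        ∃ x₁ x₂ u : ℝ → ℝ,
          ContinuousOn x₁ (Icc (0:ℝ) 1) ∧ ContinuousOn x₂ (Icc (0:ℝ) 1) ∧
          Measurable u ∧
          (∃ C : ℝ, ∀ᵐ t ∂(volume.restrict (Icc (0:ℝ) 1)), |u t| ≤ C) ∧
          (∀ᵐ t ∂(volume.restrict (Icc (0:ℝ) 1)), a < u t) ∧
          IntervalIntegrable u volume 0 1 ∧
          IntervalIntegrable (fun s => (u s) ^ 3) volume 0 1 ∧
          (∀ t ∈ Icc (0:ℝ) 1, x₁ t = x₁ 0 + ∫ s in (0:ℝ)..t, u s) ∧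
          (∀ t ∈ Icc (0:ℝ) 1, x₂ t = x₂ 0 + ∫ s in (0:ℝ)..t, (u s) ^ 3) ∧
          (x₁ 0, x₂ 0) = y.1 ∧ (x₁ 1, x₂ 1) = ((1:ℝ), (1:ℝ)) + y.2 ∧
          (∀ t ∈ Icc (0:ℝ) 1, |x₁ t - t| < δ ∧ |x₂ t - t| < δ)) := by
  intro h
  obtain ⟨ρ, hρ, hy⟩ := h 1 one_pos
  -- perturb only the terminal x₁-coordinate: y = ((0,0),(ρ/2,0))
  set s : ℝ := ρ / 2 with hs
  have hspos : 0 < s := by positivity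
  have hnorm : ‖((((0:ℝ),(0:ℝ)), ((s,(0:ℝ)))) : (ℝ × ℝ) × (ℝ × ℝ))‖ < ρ := by
    have h1 : ‖((((0:ℝ),(0:ℝ)), ((s,(0:ℝ)))) : (ℝ × ℝ) × (ℝ × ℝ))‖ = s := by
      simp [Prod.norm_def, abs_of_pos hspos, le_of_lt hspos]
    rw [h1]; linarith
  obtain ⟨x₁, x₂, u, _, _, _, _, hau, hu, hu3, hx₁, hx₂, h0, h1, _⟩ :=
    hy (((0,0)), ((s,0))) hnorm
  have h0' : x₁ 0 = 0 ∧ x₂ 0 = 0 := by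
    have := h0; simp [Prod.ext_iff] at this; exact this
  have h1' : x₁ 1 = 1 + s ∧ x₂ 1 = 1 := by
    have := h1; simp [Prod.ext_iff] at this; exact this
  have hI1 : (∫ t in (0:ℝ)..1, u t) = 1 + s := by
    have := hx₁ 1 (by norm_num)
    rw [h0'.1, h1'.1] at this; linarith
  have hI3 : (∫ t in (0:ℝ)..1, (u t) ^ 3) = 1 := by
    have := hx₂ 1 (by norm_num)
    rw [h0'.2, h1'.2] at this; linarith
  -- key inequality: u³ ≥ 3u − 2 for u ≥ −2
  have hlin : IntervalIntegrable (fun t => 3 * u t - 2) volume 0 1 := by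
    exact (hu.const_mul 3).sub (intervalIntegrable_const)
  have hmono : (∫ t in (0:ℝ)..1, 3 * u t - 2) ≤ ∫ t in (0:ℝ)..1, (u t) ^ 3 := by
    apply intervalIntegral.integral_mono_ae_restrict (by norm_num) hlin hu3
    filter_upwards [hau] with t ht
    nlinarith [sq_nonneg (u t - 1), sq_nonneg (u t + 2)]
  have hcalc : (∫ t in (0:ℝ)..1, 3 * u t - 2) = 3 * (1 + s) - 2 := by
    rw [intervalIntegral.integral_sub (hu.const_mul 3) intervalIntegrable_const,
      intervalIntegral.integral_const_mul, hI1, intervalIntegral.integral_const]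
    norm_num
  rw [hcalc, hI3] at hmono
  linarith
end
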